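/- Let (k1,k2,q1,q2) be an integer quadruple with min(k1,k2) ≥ 2, 0 < q1 < k1, 0 < q2 < k2 and k1·k2 − k1·q2 − k2·q1 = 1, and let (a1,a2) be integers with 0 < a1 ≤ k1, 0 < a2 ≤ k2 and k1·a2 − k2·a1 = q1 − q2. Define q3 = a1 + a2 − 1, m1 = k2 − a2, m2 = k1 − a1, and q4 = k1·m1 + q1. Then: (i) q4 = k2·m2 + q2; (ii) k1·k2·(k1+k2) − k1·k2·q3 − q4·(k1+k2) = 1; (iii) m1 ≥ 0, m2 ≥ 0, 0 < q3 < k1 + k2, and 0 < q4 < k1·k2. -/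
import Mathlib


theorem stmt9 (k1 k2 q1 q2 a1 a2 : ℤ) (hmin : 2 ≤ min k1 k2)
    (hq1 : 0 < q1) (hq1' : q1 < k1) (hq2 : 0 < q2) (hq2' : q2 < k2)
    (heq : k1 * k2 - k1 * q2 - k2 * q1 = 1)
    (ha1 : 0 < a1) (ha1' : a1 ≤ k1) (ha2 : 0 < a2) (ha2' : a2 ≤ k2)
    (heq2 : k1 * a2 - k2 * a1 = q1 - q2)
    (q3 m1 m2 q4 : ℤ)
    (hq3 : q3 = a1 + a2 - 1) (hm1 : m1 = k2 - a2) (hm2 : m2 = k1 - a1)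
    (hq4 : q4 = k1 * m1 + q1) :
    q4 = k2 * m2 + q2 ∧
    k1 * k2 * (k1 + k2) - k1 * k2 * q3 - q4 * (k1 + k2) = 1 ∧
    0 ≤ m1 ∧ 0 ≤ m2 ∧ 0 < q3 ∧ q3 < k1 + k2 ∧ 0 < q4 ∧ q4 < k1 * k2 := by
  have hk1 : 2 ≤ k1 := le_trans hmin (min_le_left _ _)
  have hk2 : 2 ≤ k2 := le_trans hmin (min_le_right _ _)
  subst hq3 hm1 hm2 hq4
  refine ⟨by linarith, by nlinarith, by linarith, by linarith, by linarith,
    by linarith, by nlinarith, by nlinarith⟩
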